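/- Let E and F be finite-dimensional real inner product spaces, τ > 0 and L ≥ 0. Let A : E → E be a symmetric linear map with ‖A u‖ ≤ L·‖u‖ for all u ∈ E, and let B : E → F be a linear map (with adjoint B* : F → E) satisfying ‖B u‖ ≥ τ·‖u‖ for all u ∈ E and ‖B* v‖ ≥ τ·‖v‖ for all v ∈ F. Then for every u ∈ E and v ∈ F, ‖A u + B* v‖² + ‖B u‖² ≥ (τ⁴ / (2τ² + L²)) · (‖u‖² + ‖v‖²). -/
import Mathlib


theorem smooth_geodesic_linear_norm_lower_bound
    {E F : Type*}
    [NormedAddCommGroup E] [InnerProductSpace ℝ E] [FiniteDimensional ℝ E]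
    [NormedAddCommGroup F] [InnerProductSpace ℝ F] [FiniteDimensional ℝ F]
    (τ L : ℝ) (hτ : 0 < τ) (hL : 0 ≤ L)
    (A : E →ₗ[ℝ] E) (hA : A.IsSymmetric)
    (hAL : ∀ u : E, ‖A u‖ ≤ L * ‖u‖)
    (B : E →ₗ[ℝ] F)
    (hB : ∀ u : E, τ * ‖u‖ ≤ ‖B u‖)
    (hB' : ∀ v : F, τ * ‖v‖ ≤ ‖LinearMap.adjoint B v‖)
    (u : E) (v : F) :
    τ ^ 4 / (2 * τ ^ 2 + L ^ 2) * (‖u‖ ^ 2 + ‖v‖ ^ 2)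
      ≤ ‖A u + LinearMap.adjoint B v‖ ^ 2 + ‖B u‖ ^ 2 := by
  set a := ‖u‖ with ha
  set w := ‖v‖ with hw
  set x := ‖A u + LinearMap.adjoint B v‖ with hx
  set b := ‖B u‖ with hb
  have ha0 : 0 ≤ a := norm_nonneg _
  have hw0 : 0 ≤ w := norm_nonneg _
  have hx0 : 0 ≤ x := norm_nonneg _
  have h1 : τ * a ≤ b := hB u
  have h2 : τ * w ≤ x + L * a := by
    have htri : ‖LinearMap.adjoint B v‖ ≤ x + ‖A u‖ := by
      calc ‖LinearMap.adjoint B v‖ = ‖(A u + LinearMap.adjoint B v) + (-(A u))‖ := by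
            congr 1; abel
        _ ≤ x + ‖-(A u)‖ := norm_add_le _ _
        _ = x + ‖A u‖ := by rw [norm_neg]
    calc τ * w ≤ ‖LinearMap.adjoint B v‖ := hB' v
      _ ≤ x + ‖A u‖ := htri
      _ ≤ x + L * a := by linarith [hAL u]
  have hden : 0 < 2 * τ ^ 2 + L ^ 2 := by positivity
  rw [div_mul_eq_mul_div, div_le_iff₀ hden]
  have hsq1 : τ ^ 2 * a ^ 2 ≤ b ^ 2 := by
    nlinarith [mul_self_le_mul_self (by positivity : (0:ℝ) ≤ τ * a) h1]
  have hsq2 : τ ^ 2 * w ^ 2 ≤ (x + L * a) ^ 2 := by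
    nlinarith [mul_self_le_mul_self (by positivity : (0:ℝ) ≤ τ * w) h2]
  nlinarith [mul_le_mul_of_nonneg_left hsq2 (sq_nonneg τ),
    mul_le_mul_of_nonneg_left hsq1 hden.le,
    sq_nonneg (L * x - τ ^ 2 * a), mul_pos hτ hτ, sq_nonneg x,
    mul_nonneg (mul_pos hτ hτ).le (sq_nonneg x)]
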